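/- Let a'₁, …, a'_{n+1} ∈ ℝ^n and a' ∈ ℝ^n be points such that, after the affine normalization U sending a'₁ to 0 and a'_{i+1} to (b_{1i}, …, b_{i−1,i}, bᵢ, 0, …, 0) with 0 ≤ b_{1i} ≤ b₁, |b_{ji}| ≤ b_j, b_{ii} = bᵢ > 0, the point U(a') lies in the box {0 ≤ x₁ ≤ b₁, |x₂| ≤ b₂, …, |xₙ| ≤ bₙ}. Then a' − a'₁ can be written as q₁(a'₂ − a'₁) + q₂(a'₃ − a'₁) + … + qₙ(a'_{n+1} − a'₁) with real coefficients satisfying |q_j| ≤ 2^{n−j} for j = 1, …, n. -/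

import Mathlib

noncomputable def boxQ (n : ℕ) (v : Fin n → Fin n → ℝ) (y : Fin n → ℝ) (b : Fin n → ℝ)
    (j : Fin n) : ℝ :=
  (y j - ∑ i ∈ (Finset.univ.filter (fun i : Fin n => j < i)).attach,
      boxQ n v y b i.1 * v i.1 j) / b j
termination_by n - (j : ℕ)
decreasing_by
  · have := i.2
    simp only [Finset.mem_filter, Fin.lt_def] at this
    have h2 := i.1.isLt
    omega

lemma sum_pow_filter (n : ℕ) (j : Fin n) :
    ∑ i ∈ Finset.univ.filter (fun i : Fin n => j < i), (2:ℝ) ^ (n - 1 - (i:ℕ))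
      = 2 ^ (n - 1 - (j:ℕ)) - 1 := by
  have key : ∑ i ∈ Finset.univ.filter (fun i : Fin n => j < i), (2:ℝ) ^ (n - 1 - (i:ℕ))
      = ∑ k ∈ Finset.range (n - 1 - (j:ℕ)), (2:ℝ) ^ k := by
    refine Finset.sum_nbij' (fun i => n - 1 - (i:ℕ))
      (fun k => ⟨n - 1 - k, by have := j.isLt; omega⟩) ?_ ?_ ?_ ?_ ?_
    · intro a ha
      simp only [Finset.mem_filter, Fin.lt_def] at ha
      have := a.isLt
      simp only [Finset.mem_range]
      omega
    · intro k hk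
      simp only [Finset.mem_range] at hk
      simp only [Finset.mem_filter, Fin.lt_def, Finset.mem_univ, true_and]
      have := j.isLt
      omega
    · intro a ha
      simp only [Finset.mem_filter, Fin.lt_def] at ha
      have := a.isLt
      ext
      simp
      omega
    · intro k hk
      simp only [Finset.mem_range] at hk
      simp
      omega
    · intro a _
      rfl
  rw [key, geom_sum_eq (by norm_num)]
  ring

lemma boxQ_abs_le (n : ℕ) (v : Fin n → Fin n → ℝ) (y b : Fin n → ℝ)
    (hb : ∀ i, 0 < b i)
    (hv : ∀ i j : Fin n, j < i → |v i j| ≤ b j)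
    (hy : ∀ j, |y j| ≤ b j) (j : Fin n) :
    |boxQ n v y b j| ≤ 2 ^ (n - 1 - (j : ℕ)) := by
  rw [boxQ, abs_div, abs_of_pos (hb j), div_le_iff₀ (hb j)]
  calc |y j - ∑ i ∈ (Finset.univ.filter (fun i : Fin n => j < i)).attach,
          boxQ n v y b i.1 * v i.1 j|
      ≤ |y j| + |∑ i ∈ (Finset.univ.filter (fun i : Fin n => j < i)).attach,
          boxQ n v y b i.1 * v i.1 j| := abs_sub _ _
    _ ≤ b j + ∑ i ∈ (Finset.univ.filter (fun i : Fin n => j < i)).attach,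
          (2 ^ (n - 1 - (i.1 : ℕ)) * b j) := by
        refine add_le_add (hy j) ((Finset.abs_sum_le_sum_abs _ _).trans ?_)
        refine Finset.sum_le_sum fun i _ => ?_
        rw [abs_mul]
        have hmem := i.2
        simp only [Finset.mem_filter, Finset.mem_univ, true_and] at hmem
        have h1 : |boxQ n v y b i.1| ≤ 2 ^ (n - 1 - (i.1 : ℕ)) :=
          boxQ_abs_le n v y b hb hv hy i.1
        exact mul_le_mul h1 (hv i.1 j hmem) (abs_nonneg _)
          (by positivity)
    _ = b j + (2 ^ (n - 1 - (j:ℕ)) - 1) * b j := by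
        rw [Finset.sum_attach (Finset.univ.filter (fun i : Fin n => j < i))
            (fun i : Fin n => (2:ℝ) ^ (n - 1 - (i : ℕ)) * b j),
          ← Finset.sum_mul, sum_pow_filter]
    _ = 2 ^ (n - 1 - (j:ℕ)) * b j := by ring
termination_by n - (j : ℕ)
decreasing_by
  · have := i.2
    simp only [Finset.mem_filter, Fin.lt_def] at this
    omega

lemma boxQ_eq (n : ℕ) (v : Fin n → Fin n → ℝ) (y b : Fin n → ℝ)
    (hb : ∀ i, 0 < b i) (hvd : ∀ i, v i i = b i)
    (hv0 : ∀ i j : Fin n, i < j → v i j = 0) (k : Fin n) :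
    ∑ j, boxQ n v y b j * v j k = y k := by
  have hsplit : (Finset.univ : Finset (Fin n)) =
      (Finset.univ.filter (fun j : Fin n => k ≤ j)) ∪
      (Finset.univ.filter (fun j : Fin n => j < k)) := by
    ext j; simp [le_or_gt]
  rw [hsplit, Finset.sum_union]
  · have h2 : ∑ j ∈ Finset.univ.filter (fun j : Fin n => j < k),
        boxQ n v y b j * v j k = 0 := by
      refine Finset.sum_eq_zero fun j hj => ?_
      simp only [Finset.mem_filter] at hj
      rw [hv0 j k hj.2, mul_zero]
    rw [h2, add_zero]
    have hins : Finset.univ.filter (fun j : Fin n => k ≤ j) =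
        insert k (Finset.univ.filter (fun j : Fin n => k < j)) := by
      ext j
      simp only [Finset.mem_filter, Finset.mem_univ, true_and, Finset.mem_insert]
      constructor
      · intro h; rcases eq_or_lt_of_le h with h | h
        · exact Or.inl h.symm
        · exact Or.inr h
      · rintro (rfl | h); · exact le_refl _
        · exact le_of_lt h
    rw [hins, Finset.sum_insert (by simp)]
    have hq : boxQ n v y b k * v k k =
        y k - ∑ i ∈ (Finset.univ.filter (fun i : Fin n => k < i)).attach,
          boxQ n v y b i.1 * v i.1 k := by
      rw [boxQ, hvd k, div_mul_cancel₀ _ (hb k).ne']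
    rw [hq, Finset.sum_attach (Finset.univ.filter (fun i : Fin n => k < i))
        (fun i : Fin n => boxQ n v y b i * v i k)]
    ring
  · rw [Finset.disjoint_left]
    intro j hj1 hj2
    simp only [Finset.mem_filter, Finset.mem_univ, true_and] at hj1 hj2
    exact absurd hj1 (not_le.mpr hj2)


/-- Transfer of the box lemma through an affine normalization `U`: if `U` sends
`a'₁` to `0` and the `a'_{i+1}` to box-lemma-shaped vectors, and `U(a')` lies in
the box, then `a' - a'₁` is a combination of the `a'_{j+1} - a'₁` with
coefficients `|q_j| ≤ 2^{n-j}`. -/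
theorem box_lemma_transfer (n : ℕ) (hn : 1 ≤ n)
    (b : Fin n → ℝ) (hb : ∀ i, 0 < b i)
    (a' : Fin (n + 1) → EuclideanSpace ℝ (Fin n))
    (x : EuclideanSpace ℝ (Fin n))
    (U : EuclideanSpace ℝ (Fin n) ≃ᵃ[ℝ] EuclideanSpace ℝ (Fin n))
    (hU0 : U (a' 0) = 0)
    (hdiag : ∀ i : Fin n, U (a' i.succ) i = b i)
    (hfirst : ∀ i : Fin n, 0 ≤ U (a' i.succ) ⟨0, hn⟩ ∧ U (a' i.succ) ⟨0, hn⟩ ≤ b ⟨0, hn⟩)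
    (hmid : ∀ i j : Fin n, 0 < (j : ℕ) → j < i → |U (a' i.succ) j| ≤ b j)
    (hzero : ∀ i j : Fin n, i < j → U (a' i.succ) j = 0)
    (hx0 : 0 ≤ U x ⟨0, hn⟩ ∧ U x ⟨0, hn⟩ ≤ b ⟨0, hn⟩)
    (hxj : ∀ j : Fin n, 0 < (j : ℕ) → |U x j| ≤ b j) :
    ∃ q : Fin n → ℝ, (∀ j, |q j| ≤ (2 : ℝ) ^ (n - 1 - (j : ℕ))) ∧
      x - a' 0 = ∑ j, q j • (a' j.succ - a' 0) := by
  set v : Fin n → Fin n → ℝ := fun i k => U (a' i.succ) k with hv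
  set y : Fin n → ℝ := fun k => U x k with hy
  have habs : ∀ i j : Fin n, j < i → |v i j| ≤ b j := by
    intro i j hij
    rcases Nat.eq_zero_or_pos (j : ℕ) with h0 | h0
    · have hj0 : j = ⟨0, hn⟩ := by ext; exact h0
      subst hj0
      exact abs_le.mpr ⟨by linarith [(hfirst i).1], (hfirst i).2⟩
    · exact hmid i j h0 hij
  have hyabs : ∀ j : Fin n, |y j| ≤ b j := by
    intro j
    rcases Nat.eq_zero_or_pos (j : ℕ) with h0 | h0
    · have hj0 : j = ⟨0, hn⟩ := by ext; exact h0
      subst hj0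
      exact abs_le.mpr ⟨by linarith [hx0.1], hx0.2⟩
    · exact hxj j h0
  refine ⟨boxQ n v y b, fun j => boxQ_abs_le n v y b hb habs hyabs j, ?_⟩
  set q := boxQ n v y b with hq
  -- key: U x = ∑ q j • U (a' j.succ)
  have key : U x = ∑ j, q j • U (a' j.succ) := by
    ext k
    have := boxQ_eq n v y b hb hdiag (fun i j h => hzero i j h) k
    calc U x k = y k := rfl
      _ = ∑ j, q j * v j k := this.symm
      _ = (∑ j, q j • U (a' j.succ)) k := by
          rw [WithLp.ofLp_sum, Finset.sum_apply]
          exact Finset.sum_congr rfl fun j _ => rfl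
  have hlin : ∀ p r : EuclideanSpace ℝ (Fin n), U.linear (p - r) = U p - U r := by
    intro p r
    have := U.toAffineMap.linearMap_vsub p r
    simpa [vsub_eq_sub] using this
  apply U.linear.injective
  rw [hlin x (a' 0), hU0, sub_zero, map_sum]
  rw [key]
  refine Finset.sum_congr rfl fun j _ => ?_
  rw [LinearEquiv.map_smul, hlin (a' j.succ) (a' 0), hU0, sub_zero]
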